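/- Let H be a real Hilbert space and A : H → H a bounded linear operator which is non-expansive (‖A x‖ ≤ ‖x‖ for all x) and asymptotically regular (for every x ∈ H, ‖A^{k+1} x − A^k x‖ → 0 as k → ∞). Then for every x ∈ H the sequence (A^k x)_{k∈ℕ} converges strongly to the orthogonal projection of x onto Ker(I − A). -/

import Mathlib

open Filter Topology

/-- **Lemma (Je).** Let `H` be a real Hilbert space and `A : H → H` a bounded linear
operator which is non-expansive and asymptotically regular. Then for every `x ∈ H` the
sequence `(A^k x)` converges strongly to the orthogonal projection of `x` onto
`Ker (I - A)`. -/
theorem maz'ya_picard_converges_to_projection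
    {H : Type*} [NormedAddCommGroup H] [InnerProductSpace ℝ H] [CompleteSpace H]
    (A : H →L[ℝ] H)
    (hnonexp : ∀ x : H, ‖A x‖ ≤ ‖x‖)
    (hasreg : ∀ x : H, Filter.Tendsto (fun k : ℕ => (A ^ (k + 1)) x - (A ^ k) x)
      Filter.atTop (nhds 0))
    (x : H) :
    Filter.Tendsto (fun k : ℕ => (A ^ k) x) Filter.atTop
      (nhds (Submodule.orthogonalProjectionOnto (LinearMap.ker ((ContinuousLinearMap.id ℝ H - A : H →L[ℝ] H) : H →ₗ[ℝ] H)) x : H)) := by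
  set F : Submodule ℝ H := LinearMap.ker ((ContinuousLinearMap.id ℝ H - A : H →L[ℝ] H) : H →ₗ[ℝ] H) with hFdef
  have hmemF : ∀ v : H, v ∈ F ↔ A v = v := by
    intro v
    rw [hFdef, LinearMap.mem_ker]
    constructor
    · intro h
      have := sub_eq_zero.mp h
      simp only [ContinuousLinearMap.coe_coe, ContinuousLinearMap.sub_apply, ContinuousLinearMap.id_apply] at h
      exact (sub_eq_zero.mp h).symm
    · intro h
      simp only [ContinuousLinearMap.coe_coe, ContinuousLinearMap.sub_apply, ContinuousLinearMap.id_apply, h, sub_self]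
  -- powers are nonexpansive
  have hpow : ∀ (k : ℕ) (v : H), ‖(A ^ k) v‖ ≤ ‖v‖ := by
    intro k
    induction k with
    | zero => intro v; simp
    | succ n ih =>
      intro v
      rw [pow_succ]
      exact le_trans (ih (A v)) (hnonexp v)
  set R : Submodule ℝ H := LinearMap.range ((ContinuousLinearMap.id ℝ H - A : H →L[ℝ] H) : H →ₗ[ℝ] H) with hRdef
  -- on the range of I - A, the powers tend to zero
  have hR0 : ∀ y ∈ R, Tendsto (fun k : ℕ => (A ^ k) y) atTop (nhds 0) := by
    rintro y ⟨z, rfl⟩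
    have : (fun k : ℕ => (A ^ k) ((ContinuousLinearMap.id ℝ H - A) z))
        = fun k : ℕ => -((A ^ (k + 1)) z - (A ^ k) z) := by
      funext k
      simp [pow_succ, neg_sub, map_sub]
    rw [ContinuousLinearMap.coe_coe, this]
    simpa using (hasreg z).neg
  -- extend to the closure
  have hRc0 : ∀ y ∈ R.topologicalClosure, Tendsto (fun k : ℕ => (A ^ k) y) atTop (nhds 0) := by
    intro y hy
    rw [NormedAddCommGroup.tendsto_nhds_zero]
    intro ε hε
    have hy' : y ∈ closure (R : Set H) := hy
    obtain ⟨z, hzR, hz⟩ := Metric.mem_closure_iff.mp hy' (ε / 2) (by linarith)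
    have hz' : ‖y - z‖ < ε / 2 := by rwa [← dist_eq_norm]
    have := (NormedAddCommGroup.tendsto_nhds_zero.mp (hR0 z hzR)) (ε / 2) (by linarith)
    filter_upwards [this] with k hk
    have h1 : ‖(A ^ k) y‖ ≤ ‖(A ^ k) (y - z)‖ + ‖(A ^ k) z‖ := by
      have heq : (A ^ k) y = (A ^ k) (y - z) + (A ^ k) z := by
        rw [← map_add]; congr 1; abel
      rw [heq]; exact norm_add_le _ _
    have h2 : ‖(A ^ k) (y - z)‖ ≤ ‖y - z‖ := hpow k _
    linarith
  -- the orthogonal complement of R is contained in F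
  have hAnorm : ‖A‖ ≤ 1 := A.opNorm_le_bound zero_le_one (by simpa using hnonexp)
  have hRF : Rᗮ ≤ F := by
    intro v hv
    -- first: adjoint fixes v
    have hadj : (ContinuousLinearMap.adjoint A) v = v := by
      have h : ∀ z : H, (inner ℝ z v : ℝ) = inner ℝ z ((ContinuousLinearMap.adjoint A) v) := by
        intro z
        have hz := hv ((ContinuousLinearMap.id ℝ H - A) z) ⟨z, rfl⟩
        simp only [ContinuousLinearMap.sub_apply, ContinuousLinearMap.id_apply,
          inner_sub_left, sub_eq_zero] at hz
        rw [ContinuousLinearMap.adjoint_inner_right]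
        exact hz
      exact (ext_inner_left ℝ h).symm
    -- then A fixes v
    have hinner : inner ℝ (A v) v = (‖v‖ : ℝ) ^ 2 := by
      rw [← ContinuousLinearMap.adjoint_inner_right, hadj, real_inner_self_eq_norm_sq]
    have hAv : A v = v := by
      have hsq : ‖A v - v‖ ^ 2 ≤ 0 := by
        have : ‖A v - v‖ ^ 2 = ‖A v‖ ^ 2 - 2 * inner ℝ (A v) v + ‖v‖ ^ 2 := by
          rw [← real_inner_self_eq_norm_sq, inner_sub_sub_self, real_inner_self_eq_norm_sq,
            real_inner_self_eq_norm_sq, real_inner_comm v (A v)]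
          ring
        rw [this, hinner]
        have hA2 : ‖A v‖ ^ 2 ≤ ‖v‖ ^ 2 := by
          apply sq_le_sq' _ (hnonexp v)
          linarith [norm_nonneg (A v), hnonexp v]
        nlinarith
      have := sq_nonneg ‖A v - v‖
      have hn : ‖A v - v‖ = 0 := by nlinarith
      rwa [norm_eq_zero, sub_eq_zero] at hn
    exact (hmemF v).mpr hAv
  -- hence Fᗮ is contained in the closure of R
  have hFR : Fᗮ ≤ R.topologicalClosure := by
    have h1 : R.topologicalClosureᗮ ≤ F := by
      refine le_trans ?_ hRF
      exact Submodule.orthogonal_le R.le_topologicalClosure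
    have h2 : Fᗮ ≤ R.topologicalClosureᗮᗮ := Submodule.orthogonal_le h1
    rwa [Submodule.orthogonal_orthogonal] at h2
  -- assemble
  set p : H := (F.orthogonalProjectionOnto x : H) with hp
  have hpF : p ∈ F := (F.orthogonalProjectionOnto x).2
  have hxp : x - p ∈ Fᗮ := Submodule.sub_starProjection_mem_orthogonal (K := F) x
  have hAp : A p = p := (hmemF p).mp hpF
  have hApow : ∀ k : ℕ, (A ^ k) p = p := by
    intro k
    induction k with
    | zero => simp
    | succ n ih => rw [pow_succ]; simp [hAp, ih]
  have hlim : Tendsto (fun k : ℕ => (A ^ k) (x - p)) atTop (nhds 0) :=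
    hRc0 (x - p) (hFR hxp)
  have : (fun k : ℕ => (A ^ k) x) = fun k : ℕ => p + (A ^ k) (x - p) := by
    funext k
    rw [map_sub, hApow k]
    abel
  rw [this]
  simpa using (tendsto_const_nhds.add hlim)
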